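/- The idempotent e = (1, 0, 0) of R does not belong to W, yet for every integer n ≥ 1 multiplication by e maps the ideal m₂ⁿ of W into itself: for every x ∈ m₂ⁿ, the element e·x (computed in R) lies in m₂ⁿ. In particular, e is an endomorphism of the W-module m₂ⁿ that does not come from W. -/

import Mathlib

abbrev Rng : Type := ℤ × Zsqrtd 2 × Zsqrtd 3

def Wset : Set Rng :=
  {p | p.1 ≡ p.2.1.re [ZMOD 2] ∧ p.1 ≡ p.2.2.re + p.2.2.im [ZMOD 2] ∧
       p.2.1.im ≡ p.2.2.im [ZMOD 2]}

private lemma modeq_iff (a b : ℤ) : a ≡ b [ZMOD 2] ↔ ((a : ZMod 2) = b) :=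
  (ZMod.intCast_eq_intCast_iff a b 2).symm

def W : Subring Rng where
  carrier := Wset
  zero_mem' := by refine ⟨?_, ?_, ?_⟩ <;> decide
  one_mem' := by refine ⟨?_, ?_, ?_⟩ <;> decide
  add_mem' := by
    rintro a b ⟨h1, h2, h3⟩ ⟨g1, g2, g3⟩
    refine ⟨h1.add g1, ?_, h3.add g3⟩
    simpa [add_add_add_comm] using h2.add g2
  neg_mem' := by
    rintro a ⟨h1, h2, h3⟩
    refine ⟨h1.neg, ?_, h3.neg⟩
    have := h2.neg
    simp only [Wset, Set.mem_setOf_eq, Prod.fst_neg, Prod.snd_neg, Zsqrtd.re_neg,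
      Zsqrtd.im_neg, Int.modEq_iff_dvd] at this ⊢
    omega
  mul_mem' := by
    rintro a b ⟨h1, h2, h3⟩ ⟨g1, g2, g3⟩
    simp only [Wset, Set.mem_setOf_eq, Prod.fst_mul, Prod.snd_mul, Zsqrtd.re_mul,
      Zsqrtd.im_mul, modeq_iff] at h1 h2 h3 g1 g2 g3 ⊢
    push_cast at h1 h2 h3 g1 g2 g3 ⊢
    have h0 : (2 : ZMod 2) = 0 := rfl
    refine ⟨?_, ?_, ?_⟩
    · rw [← h1, ← g1, h0]; ring
    · linear_combination (b.1 : ZMod 2) * h2 + ((a.2.2.re : ZMod 2) + a.2.2.im) * g2 -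
        ((a.2.2.im : ZMod 2) * b.2.2.im) * h0
    · linear_combination (b.2.1.im : ZMod 2) * h2 - (b.2.1.im : ZMod 2) * h1
        + (b.2.1.re : ZMod 2) * h3 + ((a.2.2.re : ZMod 2) + a.2.2.im) * g3
        + (a.2.2.im : ZMod 2) * g2 - (a.2.2.im : ZMod 2) * g1
        + ((a.2.2.im : ZMod 2) * b.2.2.im) * h0

lemma mem_W_iff (x : Rng) : x ∈ W ↔ x ∈ Wset := Iff.rfl

/-- The ideal `m₂ = {(a, b, c) ∈ W : a is even}` of `W`. -/
def m2 : Ideal W where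
  carrier := {x | Even ((x : Rng).1)}
  zero_mem' := Even.zero
  add_mem' := fun hx hy => hx.add hy
  smul_mem' := fun c x hx => hx.mul_left ((c : Rng).1)

/-- The idempotent `e = (1,0,0)` of `R`. -/
def e : Rng := ((1 : ℤ), (0 : Zsqrtd 2), (0 : Zsqrtd 3))

set_option synthInstance.maxHeartbeats 1000000 in
/-- `e = (1,0,0) ∉ W`, yet for every `n ≥ 1` multiplication by `e` (computed in `R`)
maps the ideal `m₂ⁿ` of `W` into itself. -/
theorem stmt9 :
    e ∉ W ∧
    ∀ n : ℕ, 1 ≤ n → ∀ x : W, x ∈ m2 ^ n →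
      ∃ y : W, (y : Rng) = e * (x : Rng) ∧ y ∈ m2 ^ n := by
  constructor
  · intro h
    have h1 := h.1
    simp only [e] at h1
    exact absurd h1 (by decide)
  · intro n hn
    induction n with
    | zero => omega
    | succ m ih =>
      rcases Nat.eq_zero_or_pos m with hm | hm
      · subst hm
        intro x hx
        rw [pow_one] at hx
        have hx' : Even ((x : Rng).1) := hx
        have hW : (((x : Rng).1, (0 : Zsqrtd 2), (0 : Zsqrtd 3)) : Rng) ∈ W := by
          obtain ⟨k, hk⟩ := hx'
          refine ⟨?_, ?_, ?_⟩ <;> simp only [Int.ModEq, Zsqrtd.re_zero, Zsqrtd.im_zero] <;>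
            omega
        refine ⟨⟨_, hW⟩, ?_, ?_⟩
        · show (((x : Rng).1, (0 : Zsqrtd 2), (0 : Zsqrtd 3)) : Rng) = e * (x : Rng)
          simp [e, Prod.ext_iff]
        · rw [pow_one]
          exact hx'
      · intro x hx
        rw [pow_succ] at hx
        refine Submodule.mul_induction_on hx ?_ ?_
        · intro p hp q hq
          obtain ⟨y, hy, hym⟩ := ih hm p hp
          refine ⟨y * q, ?_, ?_⟩
          · push_cast [hy]
            ring
          · rw [pow_succ]
            exact Submodule.mul_mem_mul hym hq
        · rintro a b ⟨y₁, hy₁, hy₁m⟩ ⟨y₂, hy₂, hy₂m⟩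
          refine ⟨y₁ + y₂, ?_, add_mem hy₁m hy₂m⟩
          push_cast [hy₁, hy₂]
          ring
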